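/- In the bilinear RFIF setup, assume the vertical scaling factors {s_{ij}} are steady and have uniform sums {γ_rt} under a compatible partition B={B_r}_{r=1}^m. Then for all r,t with Λ_r∩Λ'_t≠∅ and all α,β∈{0,...,N−K} with [x_α,x_{α+K}]×[y_β,y_{β+K}]∈{D'_{ij} : (i,j)∈Λ_r∩Λ'_t}, one has Σ_{(i,j)∈Λ_r(α,β)} |S(u_i(x),v_j(y))| = γ_rt for every point (x,y)∈[x_α,x_{α+K}]×[y_β,y_{β+K}]. -/

import Mathlib

/- Bilinear recurrent fractal interpolation surfaces on [0,1]² (Liang–Ruan,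
   "Construction and box dimension of recurrent fractal interpolation surfaces"). -/

noncomputable section
open Set Filter

namespace RFIS

/-- The grid point `x_i = i / N` (also used for `y_j = j / N`). -/
def xg (N i : ℕ) : ℝ := (i : ℝ) / (N : ℝ)

/-- The interval `I_i = [x_{i-1}, x_i]` (also `J_j`). -/
def Ii (N i : ℕ) : Set ℝ := Icc (xg N (i - 1)) (xg N i)

/-- The unit square `[0,1]²`. -/
def sq : Set (ℝ × ℝ) := Icc (0 : ℝ) 1 ×ˢ Icc (0 : ℝ) 1

/-- The cell `D_{ij} = I_i × J_j`. -/
def Dij (N i j : ℕ) : Set (ℝ × ℝ) := Ii N i ×ˢ Ii N j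

/-- The point `x'_i = x_{px i}` chosen from the grid. -/
def xp (N : ℕ) (px : ℕ → ℕ) (i : ℕ) : ℝ := xg N (px i)

/-- The interval `I'_i`, with endpoints `x'_{i-1}` and `x'_i`. -/
def Ii' (N : ℕ) (px : ℕ → ℕ) (i : ℕ) : Set ℝ := uIcc (xp N px (i - 1)) (xp N px i)

/-- The domain `D'_{ij} = I'_i × J'_j`. -/
def Dij' (N : ℕ) (px py : ℕ → ℕ) (i j : ℕ) : Set (ℝ × ℝ) := Ii' N px i ×ˢ Ii' N py j

/-- The affine map `u_i : I'_i → I_i` with `u_i(x'_{i-1}) = x_{i-1}` and `u_i(x'_i) = x_i`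
(also used for `v_j`). -/
def usub (N : ℕ) (px : ℕ → ℕ) (i : ℕ) (t : ℝ) : ℝ :=
  xg N (i - 1) + (t - xp N px (i - 1)) * ((xg N i - xg N (i - 1)) / (xp N px i - xp N px (i - 1)))

/-- `F` is bilinear on `E`: of the form `a + b x + c y + d x y` on `E`. -/
def IsBilinearOn (F : ℝ × ℝ → ℝ) (E : Set (ℝ × ℝ)) : Prop :=
  ∃ a b c d : ℝ, ∀ p ∈ E, F p = a + b * p.1 + c * p.2 + d * p.1 * p.2

/-- The bilinear RFIF setup on `[0,1]²`: data `z_{ij}` on the uniform `N × N` grid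
(`M = N`, `x_i = y_i = i/N`), vertical scaling factors `s_{ij}` with `|s_{ij}| < 1`,
the points `x'_i = x_{px i}`, `y'_j = y_{py j}` with `|I'_i| = K |I_i|`, `|J'_j| = K |J_j|`
and the domains `D'_{ij}` pairwise equal or with disjoint interiors; the functions `S`, `h`
bilinear on each cell with the prescribed grid values, the bilinear functions `g_{ij}` with
corner values `z'`, and the bilinear RFIF `f`: the continuous function interpolating the
data and satisfying `f(u_i x, v_j y) = S(u_i x, v_j y)(f(x,y) − g_{ij}(x,y)) + h(u_i x, v_j y)`
on each `D'_{ij}`. -/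
structure Setup where
  N : ℕ
  K : ℕ
  hN : 2 ≤ N
  hK : 2 ≤ K
  px : ℕ → ℕ
  py : ℕ → ℕ
  hpx : ∀ i ≤ N, px i ≤ N
  hpy : ∀ j ≤ N, py j ≤ N
  hKx : ∀ i, 1 ≤ i → i ≤ N → |xp N px i - xp N px (i - 1)| = (K : ℝ) * (xg N i - xg N (i - 1))
  hKy : ∀ j, 1 ≤ j → j ≤ N → |xp N py j - xp N py (j - 1)| = (K : ℝ) * (xg N j - xg N (j - 1))
  hdisj : ∀ i₁ j₁ i₂ j₂, 1 ≤ i₁ → i₁ ≤ N → 1 ≤ j₁ → j₁ ≤ N → 1 ≤ i₂ → i₂ ≤ N → 1 ≤ j₂ → j₂ ≤ N →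
    Dij' N px py i₁ j₁ = Dij' N px py i₂ j₂ ∨
      interior (Dij' N px py i₁ j₁) ∩ interior (Dij' N px py i₂ j₂) = ∅
  z : ℕ → ℕ → ℝ
  s : ℕ → ℕ → ℝ
  hs : ∀ i ≤ N, ∀ j ≤ N, |s i j| < 1
  S : ℝ × ℝ → ℝ
  hScont : ContinuousOn S sq
  hSbil : ∀ i j, 1 ≤ i → i ≤ N → 1 ≤ j → j ≤ N → IsBilinearOn S (Dij N i j)
  hSval : ∀ i ≤ N, ∀ j ≤ N, S (xg N i, xg N j) = s i j
  h : ℝ × ℝ → ℝ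
  hhcont : ContinuousOn h sq
  hhbil : ∀ i j, 1 ≤ i → i ≤ N → 1 ≤ j → j ≤ N → IsBilinearOn h (Dij N i j)
  hhval : ∀ i ≤ N, ∀ j ≤ N, h (xg N i, xg N j) = z i j
  g : ℕ → ℕ → ℝ × ℝ → ℝ
  hgbil : ∀ i j, 1 ≤ i → i ≤ N → 1 ≤ j → j ≤ N → IsBilinearOn (g i j) (Dij' N px py i j)
  hgval : ∀ i j, 1 ≤ i → i ≤ N → 1 ≤ j → j ≤ N →
    ∀ k ∈ ({i - 1, i} : Set ℕ), ∀ l ∈ ({j - 1, j} : Set ℕ),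
      g i j (xp N px k, xp N py l) = z (px k) (py l)
  f : ℝ × ℝ → ℝ
  hfcont : ContinuousOn f sq
  hfval : ∀ i ≤ N, ∀ j ≤ N, f (xg N i, xg N j) = z i j
  hfeq : ∀ i j, 1 ≤ i → i ≤ N → 1 ≤ j → j ≤ N → ∀ p ∈ Dij' N px py i j,
    f (usub N px i p.1, usub N py j p.2)
      = S (usub N px i p.1, usub N py j p.2) * (f p - g i j p)
        + h (usub N px i p.1, usub N py j p.2)

/-- The oscillation `O(f, E) = sup {f(x') − f(x'') : x', x'' ∈ E}`. -/
def Osc (f : ℝ × ℝ → ℝ) (E : Set (ℝ × ℝ)) : ℝ :=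
  sSup {d : ℝ | ∃ p ∈ E, ∃ q ∈ E, d = f p - f q}

/-- The dyadic-type square `Dⁿ_{kl} = [(k-1)/(KⁿN), k/(KⁿN)] × [(l-1)/(KⁿN), l/(KⁿN)]`. -/
def Dn (N K n k l : ℕ) : Set (ℝ × ℝ) :=
  Icc (((k : ℝ) - 1) / ((K : ℝ) ^ n * (N : ℝ))) ((k : ℝ) / ((K : ℝ) ^ n * (N : ℝ))) ×ˢ
    Icc (((l : ℝ) - 1) / ((K : ℝ) ^ n * (N : ℝ))) ((l : ℝ) / ((K : ℝ) ^ n * (N : ℝ)))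

open Classical in
/-- `O(f, n, U) = Σ { O(f, Dⁿ_{kl}) : Dⁿ_{kl} ⊆ U }`. -/
def OscSum (f : ℝ × ℝ → ℝ) (N K n : ℕ) (U : Set (ℝ × ℝ)) : ℝ :=
  ∑ k ∈ Finset.Icc 1 (K ^ n * N), ∑ l ∈ Finset.Icc 1 (K ^ n * N),
    if Dn N K n k l ⊆ U then Osc f (Dn N K n k l) else 0

/-- The `ε`-coordinate cube `∏_{i=1}^3 [k_i ε, (k_i+1) ε]` in `ℝ³`. -/
def cube (ε : ℝ) (k : ℤ × ℤ × ℤ) : Set (ℝ × ℝ × ℝ) :=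
  Icc ((k.1 : ℝ) * ε) (((k.1 : ℝ) + 1) * ε) ×ˢ
    Icc ((k.2.1 : ℝ) * ε) (((k.2.1 : ℝ) + 1) * ε) ×ˢ
      Icc ((k.2.2 : ℝ) * ε) (((k.2.2 : ℝ) + 1) * ε)

/-- `N_E(ε)`: the number of `ε`-coordinate cubes intersecting `E`. -/
def Ncubes (E : Set (ℝ × ℝ × ℝ)) (ε : ℝ) : ℕ :=
  {k : ℤ × ℤ × ℤ | (cube ε k ∩ E).Nonempty}.ncard

/-- `log N_E(ε) / log (1/ε)`. -/
def boxRatio (E : Set (ℝ × ℝ × ℝ)) (ε : ℝ) : ℝ :=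
  Real.log (Ncubes E ε) / Real.log (1 / ε)

/-- The upper box dimension `lim sup_{ε→0+} log N_E(ε) / log (1/ε)`. -/
def upperBoxDim (E : Set (ℝ × ℝ × ℝ)) : ℝ :=
  limsup (boxRatio E) (nhdsWithin 0 (Ioi 0))

/-- The lower box dimension `lim inf_{ε→0+} log N_E(ε) / log (1/ε)`. -/
def lowerBoxDim (E : Set (ℝ × ℝ × ℝ)) : ℝ :=
  liminf (boxRatio E) (nhdsWithin 0 (Ioi 0))

/-- The box dimension of `E` exists and equals `d`. -/
def HasBoxDim (E : Set (ℝ × ℝ × ℝ)) (d : ℝ) : Prop :=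
  Tendsto (boxRatio E) (nhdsWithin 0 (Ioi 0)) (nhds d)

/-- The graph `Γ f|_E = {(x, y, f(x,y)) : (x,y) ∈ E}`. -/
def graphOn (f : ℝ × ℝ → ℝ) (E : Set (ℝ × ℝ)) : Set (ℝ × ℝ × ℝ) :=
  (fun p : ℝ × ℝ => (p.1, p.2, f p)) '' E

/-- `B` is a partition of `[0,1]²`: nonempty sets covering `[0,1]²` with pairwise
disjoint interiors. -/
def IsPartition (m : ℕ) (B : Fin m → Set (ℝ × ℝ)) : Prop :=
  (∀ r, (B r).Nonempty) ∧ (⋃ r, B r) = sq ∧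
    ∀ r t, r ≠ t → interior (B r) ∩ interior (B t) = ∅

/-- The partition `B` is compatible with `{D_{ij}, D'_{ij}}`: every `D_{ij}` lies in some
`B_r` and every `D'_{ij}` in some `B_t`; and whenever some `(i,j)` has `D_{ij} ⊆ B_r` and
`D'_{ij} ⊆ B_t`, then `B_t = ⋃ {D'_{kl} : D_{kl} ⊆ B_r, D'_{kl} ⊆ B_t}`. -/
def IsCompatible (st : Setup) {m : ℕ} (B : Fin m → Set (ℝ × ℝ)) : Prop :=
  (∀ i j, 1 ≤ i → i ≤ st.N → 1 ≤ j → j ≤ st.N →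
    (∃ r, Dij st.N i j ⊆ B r) ∧ (∃ t, Dij' st.N st.px st.py i j ⊆ B t)) ∧
  (∀ r t : Fin m,
    (∃ i j, 1 ≤ i ∧ i ≤ st.N ∧ 1 ≤ j ∧ j ≤ st.N ∧
      Dij st.N i j ⊆ B r ∧ Dij' st.N st.px st.py i j ⊆ B t) →
    B t = ⋃ (k : ℕ) (l : ℕ)
      (_ : 1 ≤ k ∧ k ≤ st.N ∧ 1 ≤ l ∧ l ≤ st.N ∧
        Dij st.N k l ⊆ B r ∧ Dij' st.N st.px st.py k l ⊆ B t),
      Dij' st.N st.px st.py k l)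

/-- The index set `Σ_N × Σ_N = {1,…,N}²`. -/
def idxS (N : ℕ) : Finset (ℕ × ℕ) := Finset.Icc 1 N ×ˢ Finset.Icc 1 N

open Classical in
/-- `Λ_r = {(i,j) : D_{ij} ⊆ B_r}`. -/
def Lam (st : Setup) {m : ℕ} (B : Fin m → Set (ℝ × ℝ)) (r : Fin m) : Finset (ℕ × ℕ) :=
  (idxS st.N).filter fun ij => Dij st.N ij.1 ij.2 ⊆ B r

open Classical in
/-- `Λ'_t = {(i,j) : D'_{ij} ⊆ B_t}`. -/
def Lam' (st : Setup) {m : ℕ} (B : Fin m → Set (ℝ × ℝ)) (t : Fin m) : Finset (ℕ × ℕ) :=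
  (idxS st.N).filter fun ij => Dij' st.N st.px st.py ij.1 ij.2 ⊆ B t

/-- The rectangle `[x_α, x_{α+K}] × [y_β, y_{β+K}]`. -/
def rect (N K α β : ℕ) : Set (ℝ × ℝ) :=
  Icc (xg N α) (xg N (α + K)) ×ˢ Icc (xg N β) (xg N (β + K))

open Classical in
/-- `Λ_r(α,β) = {(i,j) ∈ Λ_r : D'_{ij} = [x_α, x_{α+K}] × [y_β, y_{β+K}]}`. -/
def LamAB (st : Setup) {m : ℕ} (B : Fin m → Set (ℝ × ℝ)) (r : Fin m) (α β : ℕ) :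
    Finset (ℕ × ℕ) :=
  (Lam st B r).filter fun ij => Dij' st.N st.px st.py ij.1 ij.2 = rect st.N st.K α β

/-- The vertical scaling factors are steady: for each cell, the four corner factors are
all nonnegative or all nonpositive. -/
def Steady (st : Setup) : Prop :=
  ∀ i j, 1 ≤ i → i ≤ st.N → 1 ≤ j → j ≤ st.N →
    (0 ≤ st.s (i - 1) (j - 1) ∧ 0 ≤ st.s (i - 1) j ∧ 0 ≤ st.s i (j - 1) ∧ 0 ≤ st.s i j) ∨
    (st.s (i - 1) (j - 1) ≤ 0 ∧ st.s (i - 1) j ≤ 0 ∧ st.s i (j - 1) ≤ 0 ∧ st.s i j ≤ 0)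

/-- The sum `Σ_{(i,j) ∈ Λ_r(α,β)} |S(u_i(x_a), v_j(y_b))|`. -/
def cSum (st : Setup) {m : ℕ} (B : Fin m → Set (ℝ × ℝ)) (r : Fin m) (α β a b : ℕ) : ℝ :=
  ∑ ij ∈ LamAB st B r α β,
    |st.S (usub st.N st.px ij.1 (xg st.N a), usub st.N st.py ij.2 (xg st.N b))|

/-- The vertical scaling factors have uniform sums `γ_{rt}` under the partition `B`:
whenever `Λ_r ∩ Λ'_t ≠ ∅` and `[x_α, x_{α+K}] × [y_β, y_{β+K}] ∈ {D'_{ij} : (i,j) ∈ Λ_r ∩ Λ'_t}`,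
the four corner sums `Σ_{(i,j) ∈ Λ_r(α,β)} |S(u_i(x_a), v_j(y_b))|`,
`(a,b) ∈ {α, α+K} × {β, β+K}`, all equal `γ_{rt}`. -/
def HasUniformSums (st : Setup) {m : ℕ} (B : Fin m → Set (ℝ × ℝ))
    (γ : Fin m → Fin m → ℝ) : Prop :=
  ∀ r t : Fin m, (Lam st B r ∩ Lam' st B t).Nonempty →
    ∀ α β : ℕ, α + st.K ≤ st.N → β + st.K ≤ st.N →
      (∃ ij ∈ Lam st B r ∩ Lam' st B t,
        Dij' st.N st.px st.py ij.1 ij.2 = rect st.N st.K α β) →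
      cSum st B r α β α β = γ r t ∧ cSum st B r α β (α + st.K) β = γ r t ∧
      cSum st B r α β α (β + st.K) = γ r t ∧ cSum st B r α β (α + st.K) (β + st.K) = γ r t

/-- `γ_{rt} = 0` whenever `Λ_r ∩ Λ'_t = ∅`. -/
def GammaZero (st : Setup) {m : ℕ} (B : Fin m → Set (ℝ × ℝ))
    (γ : Fin m → Fin m → ℝ) : Prop :=
  ∀ r t : Fin m, Lam st B r ∩ Lam' st B t = ∅ → γ r t = 0

/-- There is an `n`-path (for some `n ≥ 1`) from `t` to `r` in the matrix `γ`:
a sequence `i_0 = t, …, i_n = r` with `γ_{i_k, i_{k-1}} > 0` for `k = 1, …, n`. -/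
def IsPathFrom {m : ℕ} (γ : Fin m → Fin m → ℝ) (t r : Fin m) : Prop :=
  ∃ n : ℕ, 1 ≤ n ∧ ∃ c : ℕ → Fin m, c 0 = t ∧ c n = r ∧
    ∀ k, 1 ≤ k → k ≤ n → 0 < γ (c k) (c (k - 1))

/-- `r ∼ t`: there are paths both from `r` to `t` and from `t` to `r`. -/
def Conn {m : ℕ} (γ : Fin m → Fin m → ℝ) (r t : Fin m) : Prop :=
  IsPathFrom γ r t ∧ IsPathFrom γ t r

/-- A connected subset: `r ∼ t` for all `r, t ∈ V`. -/
def IsConnSet {m : ℕ} (γ : Fin m → Fin m → ℝ) (V : Finset (Fin m)) : Prop :=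
  ∀ r ∈ V, ∀ t ∈ V, Conn γ r t

/-- A connected component: a maximal (nonempty) connected subset. -/
def IsConnComp {m : ℕ} (γ : Fin m → Fin m → ℝ) (V : Finset (Fin m)) : Prop :=
  V.Nonempty ∧ IsConnSet γ V ∧ ∀ W : Finset (Fin m), IsConnSet γ W → V ⊆ W → W = V

/-- The spectral radius of a real square matrix: the largest modulus of a (complex)
eigenvalue. -/
def specRad {n : Type*} [Fintype n] [DecidableEq n] (A : Matrix n n ℝ) : ℝ :=
  sSup {x : ℝ | ∃ μ ∈ spectrum ℂ (A.map (algebraMap ℝ ℂ)), x = ‖μ‖}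

/-- The submatrix `G|_V` of `G = (γ_{rt})` indexed by a subset `V`. -/
def subMat {m : ℕ} (γ : Fin m → Fin m → ℝ) (V : Finset (Fin m)) :
    Matrix {x // x ∈ V} {x // x ∈ V} ℝ :=
  fun a b => γ a.1 b.1

/-- `(k,l)` is an ancestor of `(i,j)`: there is a chain `(i,j) = (i_0,j_0), …, (i_n,j_n) = (k,l)`
in `Σ_N × Σ_N` with `D_{i_τ j_τ} ⊆ D'_{i_{τ-1} j_{τ-1}}` for all `τ`. -/
def Ancestor (st : Setup) (i j k l : ℕ) : Prop :=
  ∃ n : ℕ, 1 ≤ n ∧ ∃ c : ℕ → ℕ × ℕ,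
    c 0 = (i, j) ∧ c n = (k, l) ∧
    (∀ τ ≤ n, 1 ≤ (c τ).1 ∧ (c τ).1 ≤ st.N ∧ 1 ≤ (c τ).2 ∧ (c τ).2 ≤ st.N) ∧
    ∀ τ, 1 ≤ τ → τ ≤ n →
      Dij st.N (c τ).1 (c τ).2 ⊆ Dij' st.N st.px st.py (c (τ - 1)).1 (c (τ - 1)).2

/-- `A(i,j) = {(i,j)} ∪ {ancestors of (i,j)}`. -/
def AncSet (st : Setup) (i j : ℕ) : Set (ℕ × ℕ) :=
  {(i, j)} ∪ {kl | Ancestor st i j kl.1 kl.2}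

/-- The pair `(i,j)` is degenerate: every `(k,l) ∈ A(i,j)` has all four vertical scaling
corner factors zero, or `z_{pq} = g_{kl}(x_p, y_q)` for all grid points `(x_p, y_q) ∈ D'_{kl}`. -/
def DegenPair (st : Setup) (i j : ℕ) : Prop :=
  ∀ kl ∈ AncSet st i j,
    (st.s (kl.1 - 1) (kl.2 - 1) = 0 ∧ st.s (kl.1 - 1) kl.2 = 0 ∧
      st.s kl.1 (kl.2 - 1) = 0 ∧ st.s kl.1 kl.2 = 0) ∨
    (∀ p ≤ st.N, ∀ q ≤ st.N, (xg st.N p, xg st.N q) ∈ Dij' st.N st.px st.py kl.1 kl.2 →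
      st.z p q = st.g kl.1 kl.2 (xg st.N p, xg st.N q))

/-- The index `r` is degenerate: every `(i,j) ∈ Λ_r` is degenerate. -/
def DegenIdx (st : Setup) {m : ℕ} (B : Fin m → Set (ℝ × ℝ)) (r : Fin m) : Prop :=
  ∀ ij ∈ Lam st B r, DegenPair st ij.1 ij.2

/-- A set `V` of indices is degenerate: every `r ∈ V` is degenerate. -/
def DegenComp (st : Setup) {m : ℕ} (B : Fin m → Set (ℝ × ℝ)) (V : Finset (Fin m)) : Prop :=
  ∀ r ∈ V, DegenIdx st B r

end RFIS


section AuxLemmas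
open Set RFIS

/-- Affine interpolation maps the (possibly reversed) interval into `[q0,q1]`. -/
lemma aux_affine_maps (p0 p1 q0 q1 t : ℝ) (hp : p0 ≠ p1) (hq : q0 ≤ q1)
    (ht : t ∈ Set.uIcc p0 p1) :
    q0 + (t - p0) * ((q1 - q0) / (p1 - p0)) ∈ Set.Icc q0 q1 := by
  rcases le_total p0 p1 with h | h
  · rw [Set.uIcc_of_le h] at ht
    have hlt : p0 < p1 := lt_of_le_of_ne h hp
    have hQ : 0 ≤ (q1 - q0) / (p1 - p0) := div_nonneg (by linarith) (by linarith)
    constructor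
    · nlinarith [ht.1]
    · have h1 : (t - p0) * ((q1 - q0) / (p1 - p0))
          ≤ (p1 - p0) * ((q1 - q0) / (p1 - p0)) :=
        mul_le_mul_of_nonneg_right (by linarith [ht.2]) hQ
      have h2 : (p1 - p0) * ((q1 - q0) / (p1 - p0)) = q1 - q0 := by
        rw [mul_comm, div_mul_cancel₀ _ (sub_ne_zero.2 (Ne.symm hp))]
      linarith
  · rw [Set.uIcc_of_ge h] at ht
    have hlt : p1 < p0 := lt_of_le_of_ne h (Ne.symm hp)
    have hQ : (q1 - q0) / (p1 - p0) ≤ 0 :=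
      div_nonpos_of_nonneg_of_nonpos (by linarith) (by linarith)
    constructor
    · nlinarith [ht.2]
    · have h1 : (t - p0) * ((q1 - q0) / (p1 - p0))
          ≤ (p1 - p0) * ((q1 - q0) / (p1 - p0)) :=
        mul_le_mul_of_nonpos_right (by linarith [ht.1]) hQ
      have h2 : (p1 - p0) * ((q1 - q0) / (p1 - p0)) = q1 - q0 := by
        rw [mul_comm, div_mul_cancel₀ _ (sub_ne_zero.2 (Ne.symm hp))]
      linarith

/-- A bilinear function nonnegative at the four corners of a rectangle is
nonnegative on the rectangle. -/
lemma aux_bil_nonneg (a b c d q0 q1 r0 r1 : ℝ) (hq : q0 < q1) (hr : r0 < r1)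
    (h00 : 0 ≤ a + b*q0 + c*r0 + d*q0*r0) (h10 : 0 ≤ a + b*q1 + c*r0 + d*q1*r0)
    (h01 : 0 ≤ a + b*q0 + c*r1 + d*q0*r1) (h11 : 0 ≤ a + b*q1 + c*r1 + d*q1*r1) :
    ∀ u ∈ Set.Icc q0 q1, ∀ v ∈ Set.Icc r0 r1, 0 ≤ a + b*u + c*v + d*u*v := by
  intro u hu v hv
  set σ := (u - q0) / (q1 - q0) with hσdef
  set τ := (v - r0) / (r1 - r0) with hτdef
  have hq' : q1 - q0 ≠ 0 := by linarith
  have hr' : r1 - r0 ≠ 0 := by linarith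
  have huu : u = q0 + σ * (q1 - q0) := by rw [hσdef, div_mul_cancel₀ _ hq']; ring
  have hvv : v = r0 + τ * (r1 - r0) := by rw [hτdef, div_mul_cancel₀ _ hr']; ring
  have hσ0 : 0 ≤ σ := div_nonneg (by linarith [hu.1]) (by linarith)
  have hσ1 : σ ≤ 1 := by rw [hσdef, div_le_one (by linarith)]; linarith [hu.2]
  have hτ0 : 0 ≤ τ := div_nonneg (by linarith [hv.1]) (by linarith)
  have hτ1 : τ ≤ 1 := by rw [hτdef, div_le_one (by linarith)]; linarith [hv.2]
  have key : a + b*u + c*v + d*u*v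
      = (1-σ)*(1-τ)*(a + b*q0 + c*r0 + d*q0*r0)
        + σ*(1-τ)*(a + b*q1 + c*r0 + d*q1*r0)
        + (1-σ)*τ*(a + b*q0 + c*r1 + d*q0*r1)
        + σ*τ*(a + b*q1 + c*r1 + d*q1*r1) := by
    rw [huu, hvv]; ring
  rw [key]
  have t1 := mul_nonneg (mul_nonneg (by linarith : (0:ℝ) ≤ 1-σ) (by linarith : (0:ℝ) ≤ 1-τ)) h00
  have t2 := mul_nonneg (mul_nonneg hσ0 (by linarith : (0:ℝ) ≤ 1-τ)) h10
  have t3 := mul_nonneg (mul_nonneg (by linarith : (0:ℝ) ≤ 1-σ) hτ0) h01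
  have t4 := mul_nonneg (mul_nonneg hσ0 hτ0) h11
  linarith

/-- A bilinear function nonpositive at the four corners of a rectangle is
nonpositive on the rectangle. -/
lemma aux_bil_nonpos (a b c d q0 q1 r0 r1 : ℝ) (hq : q0 < q1) (hr : r0 < r1)
    (h00 : a + b*q0 + c*r0 + d*q0*r0 ≤ 0) (h10 : a + b*q1 + c*r0 + d*q1*r0 ≤ 0)
    (h01 : a + b*q0 + c*r1 + d*q0*r1 ≤ 0) (h11 : a + b*q1 + c*r1 + d*q1*r1 ≤ 0) :
    ∀ u ∈ Set.Icc q0 q1, ∀ v ∈ Set.Icc r0 r1, a + b*u + c*v + d*u*v ≤ 0 := by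
  intro u hu v hv
  set σ := (u - q0) / (q1 - q0) with hσdef
  set τ := (v - r0) / (r1 - r0) with hτdef
  have hq' : q1 - q0 ≠ 0 := by linarith
  have hr' : r1 - r0 ≠ 0 := by linarith
  have huu : u = q0 + σ * (q1 - q0) := by rw [hσdef, div_mul_cancel₀ _ hq']; ring
  have hvv : v = r0 + τ * (r1 - r0) := by rw [hτdef, div_mul_cancel₀ _ hr']; ring
  have hσ0 : 0 ≤ σ := div_nonneg (by linarith [hu.1]) (by linarith)
  have hσ1 : σ ≤ 1 := by rw [hσdef, div_le_one (by linarith)]; linarith [hu.2]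
  have hτ0 : 0 ≤ τ := div_nonneg (by linarith [hv.1]) (by linarith)
  have hτ1 : τ ≤ 1 := by rw [hτdef, div_le_one (by linarith)]; linarith [hv.2]
  have key : a + b*u + c*v + d*u*v
      = (1-σ)*(1-τ)*(a + b*q0 + c*r0 + d*q0*r0)
        + σ*(1-τ)*(a + b*q1 + c*r0 + d*q1*r0)
        + (1-σ)*τ*(a + b*q0 + c*r1 + d*q0*r1)
        + σ*τ*(a + b*q1 + c*r1 + d*q1*r1) := by
    rw [huu, hvv]; ring
  rw [key]
  have t1 := mul_nonpos_of_nonneg_of_nonpos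
    (mul_nonneg (by linarith : (0:ℝ) ≤ 1-σ) (by linarith : (0:ℝ) ≤ 1-τ)) h00
  have t2 := mul_nonpos_of_nonneg_of_nonpos
    (mul_nonneg hσ0 (by linarith : (0:ℝ) ≤ 1-τ)) h10
  have t3 := mul_nonpos_of_nonneg_of_nonpos
    (mul_nonneg (by linarith : (0:ℝ) ≤ 1-σ) hτ0) h01
  have t4 := mul_nonpos_of_nonneg_of_nonpos (mul_nonneg hσ0 hτ0) h11
  linarith

/-- A bilinear function equal to `g` at the four corners of a nondegenerate
rectangle is identically `g`. -/
lemma aux_bil_const (a b c d x0 x1 y0 y1 g : ℝ) (hx : x0 ≠ x1) (hy : y0 ≠ y1)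
    (h00 : a + b*x0 + c*y0 + d*x0*y0 = g) (h10 : a + b*x1 + c*y0 + d*x1*y0 = g)
    (h01 : a + b*x0 + c*y1 + d*x0*y1 = g) (h11 : a + b*x1 + c*y1 + d*x1*y1 = g) :
    ∀ x y : ℝ, a + b*x + c*y + d*x*y = g := by
  have hx' : x1 - x0 ≠ 0 := sub_ne_zero.2 (Ne.symm hx)
  have hy' : y1 - y0 ≠ 0 := sub_ne_zero.2 (Ne.symm hy)
  have e1 : (b + d*y0) * (x1 - x0) = 0 := by linear_combination h10 - h00
  have e2 : (b + d*y1) * (x1 - x0) = 0 := by linear_combination h11 - h01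
  have f1 : b + d*y0 = 0 := by
    rcases mul_eq_zero.1 e1 with h | h
    · exact h
    · exact absurd h hx'
  have f2 : b + d*y1 = 0 := by
    rcases mul_eq_zero.1 e2 with h | h
    · exact h
    · exact absurd h hx'
  have e3 : d * (y1 - y0) = 0 := by linear_combination f2 - f1
  have hd : d = 0 := by
    rcases mul_eq_zero.1 e3 with h | h
    · exact h
    · exact absurd h hy'
  have hb : b = 0 := by linear_combination f1 - y0 * hd
  have e4 : c * (y1 - y0) = 0 := by linear_combination h01 - h00 - x0 * (f2 - f1)
  have hc : c = 0 := by
    rcases mul_eq_zero.1 e4 with h | h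
    · exact h
    · exact absurd h hy'
  have ha : a = g := by linear_combination h00 - x0*hb - y0*hc - (x0*y0)*hd
  intro x y
  linear_combination ha + x*hb + y*hc + (x*y)*hd

/-- A finite sum of bilinear functions is bilinear. -/
lemma aux_bil_sum {ι : Type*} [DecidableEq ι] (T : Finset ι) (F : ι → ℝ × ℝ → ℝ)
    (E : Set (ℝ × ℝ)) (h : ∀ i ∈ T, IsBilinearOn (F i) E) :
    IsBilinearOn (fun p => ∑ i ∈ T, F i p) E := by
  induction T using Finset.induction_on with
  | empty => exact ⟨0, 0, 0, 0, fun p _ => by simp⟩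
  | @insert i T hni ih =>
    obtain ⟨a, b, c, d, h1⟩ := h i (Finset.mem_insert_self _ _)
    obtain ⟨a', b', c', d', h2⟩ := ih (fun k hk => h k (Finset.mem_insert_of_mem hk))
    refine ⟨a + a', b + b', c + c', d + d', fun p hp => ?_⟩
    have h2' := h2 p hp
    simp only at h2'
    simp only [Finset.sum_insert hni, h1 p hp, h2']
    ring

/-- Each summand `|S(u_i(x), v_j(y))|` is bilinear on the rectangle. -/
lemma aux_term_bil (st : Setup) {m : ℕ} (B : Fin m → Set (ℝ × ℝ)) (r : Fin m)
    (α β : ℕ) (hsteady : Steady st) (ij : ℕ × ℕ) (hij : ij ∈ LamAB st B r α β) :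
    IsBilinearOn (fun p => |st.S (usub st.N st.px ij.1 p.1, usub st.N st.py ij.2 p.2)|)
      (rect st.N st.K α β) := by
  classical
  obtain ⟨i, j⟩ := ij
  simp only [LamAB, Lam, idxS, Finset.mem_filter, Finset.mem_product, Finset.mem_Icc] at hij
  obtain ⟨⟨⟨⟨hi1, hiN⟩, hj1, hjN⟩, -⟩, hD'⟩ := hij
  have hN0 : (0:ℝ) < st.N := Nat.cast_pos.2 (by omega)
  have hK0 : (0:ℝ) < st.K := Nat.cast_pos.2 (by have := st.hK; omega)
  have hci : ((i - 1 : ℕ) : ℝ) = (i : ℝ) - 1 := by rw [Nat.cast_sub hi1, Nat.cast_one]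
  have hcj : ((j - 1 : ℕ) : ℝ) = (j : ℝ) - 1 := by rw [Nat.cast_sub hj1, Nat.cast_one]
  have hqgap : xg st.N i - xg st.N (i-1) = 1 / st.N := by
    unfold xg; rw [hci]; ring
  have hrgap : xg st.N j - xg st.N (j-1) = 1 / st.N := by
    unfold xg; rw [hcj]; ring
  have hinv : (0:ℝ) < 1 / st.N := by positivity
  have hqlt : xg st.N (i-1) < xg st.N i := by linarith
  have hrlt : xg st.N (j-1) < xg st.N j := by linarith
  -- the defining points of I'_i, J'_j are distinct
  have hpx_ne : xp st.N st.px (i-1) ≠ xp st.N st.px i := by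
    have hk := st.hKx i hi1 hiN
    rw [hqgap] at hk
    have hKpos : (0:ℝ) < (st.K:ℝ) * (1 / st.N) := by positivity
    intro h0
    rw [h0, sub_self, abs_zero] at hk
    linarith
  have hpy_ne : xp st.N st.py (j-1) ≠ xp st.N st.py j := by
    have hk := st.hKy j hj1 hjN
    rw [hrgap] at hk
    have hKpos : (0:ℝ) < (st.K:ℝ) * (1 / st.N) := by positivity
    intro h0
    rw [h0, sub_self, abs_zero] at hk
    linarith
  -- component equalities from D'_{ij} = rect
  have hDD : Ii' st.N st.px i ×ˢ Ii' st.N st.py j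
      = Icc (xg st.N α) (xg st.N (α + st.K)) ×ˢ Icc (xg st.N β) (xg st.N (β + st.K)) := hD'
  have hneP : (Ii' st.N st.px i ×ˢ Ii' st.N st.py j).Nonempty :=
    ⟨(xp st.N st.px (i-1), xp st.N st.py (j-1)),
      Set.mem_prod.2 ⟨Set.left_mem_uIcc, Set.left_mem_uIcc⟩⟩
  obtain ⟨hIx, hIy⟩ := (Set.prod_eq_prod_iff_of_nonempty hneP).1 hDD
  -- the affine maps send the rectangle into the cell
  have hmapx : ∀ t ∈ Icc (xg st.N α) (xg st.N (α + st.K)),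
      usub st.N st.px i t ∈ Icc (xg st.N (i-1)) (xg st.N i) := by
    intro t ht
    have ht' : t ∈ Set.uIcc (xp st.N st.px (i-1)) (xp st.N st.px i) := by
      have h1 : t ∈ Ii' st.N st.px i := by rw [hIx]; exact ht
      exact h1
    exact aux_affine_maps _ _ _ _ t hpx_ne hqlt.le ht'
  have hmapy : ∀ t ∈ Icc (xg st.N β) (xg st.N (β + st.K)),
      usub st.N st.py j t ∈ Icc (xg st.N (j-1)) (xg st.N j) := by
    intro t ht
    have ht' : t ∈ Set.uIcc (xp st.N st.py (j-1)) (xp st.N st.py j) := by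
      have h1 : t ∈ Ii' st.N st.py j := by rw [hIy]; exact ht
      exact h1
    exact aux_affine_maps _ _ _ _ t hpy_ne hrlt.le ht'
  -- bilinearity of S on the cell and its corner values
  obtain ⟨a, b, c, d, hS⟩ := st.hSbil i j hi1 hiN hj1 hjN
  have mkmem : ∀ u v : ℝ, u ∈ Icc (xg st.N (i-1)) (xg st.N i) →
      v ∈ Icc (xg st.N (j-1)) (xg st.N j) → (u, v) ∈ Dij st.N i j :=
    fun u v hu hv => Set.mem_prod.2 ⟨hu, hv⟩
  have hS00 : st.S (xg st.N (i-1), xg st.N (j-1))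
      = a + b * xg st.N (i-1) + c * xg st.N (j-1) + d * xg st.N (i-1) * xg st.N (j-1) :=
    hS _ (mkmem _ _ (Set.mem_Icc.2 ⟨le_rfl, hqlt.le⟩) (Set.mem_Icc.2 ⟨le_rfl, hrlt.le⟩))
  have hS10 : st.S (xg st.N i, xg st.N (j-1))
      = a + b * xg st.N i + c * xg st.N (j-1) + d * xg st.N i * xg st.N (j-1) :=
    hS _ (mkmem _ _ (Set.mem_Icc.2 ⟨hqlt.le, le_rfl⟩) (Set.mem_Icc.2 ⟨le_rfl, hrlt.le⟩))
  have hS01 : st.S (xg st.N (i-1), xg st.N j)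
      = a + b * xg st.N (i-1) + c * xg st.N j + d * xg st.N (i-1) * xg st.N j :=
    hS _ (mkmem _ _ (Set.mem_Icc.2 ⟨le_rfl, hqlt.le⟩) (Set.mem_Icc.2 ⟨hrlt.le, le_rfl⟩))
  have hS11 : st.S (xg st.N i, xg st.N j)
      = a + b * xg st.N i + c * xg st.N j + d * xg st.N i * xg st.N j :=
    hS _ (mkmem _ _ (Set.mem_Icc.2 ⟨hqlt.le, le_rfl⟩) (Set.mem_Icc.2 ⟨hrlt.le, le_rfl⟩))
  have e00 : a + b * xg st.N (i-1) + c * xg st.N (j-1) + d * xg st.N (i-1) * xg st.N (j-1)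
      = st.s (i-1) (j-1) := by
    rw [← hS00]; exact st.hSval (i-1) (by omega) (j-1) (by omega)
  have e10 : a + b * xg st.N i + c * xg st.N (j-1) + d * xg st.N i * xg st.N (j-1)
      = st.s i (j-1) := by
    rw [← hS10]; exact st.hSval i hiN (j-1) (by omega)
  have e01 : a + b * xg st.N (i-1) + c * xg st.N j + d * xg st.N (i-1) * xg st.N j
      = st.s (i-1) j := by
    rw [← hS01]; exact st.hSval (i-1) (by omega) j hjN
  have e11 : a + b * xg st.N i + c * xg st.N j + d * xg st.N i * xg st.N j
      = st.s i j := by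
    rw [← hS11]; exact st.hSval i hiN j hjN
  -- affine form of the maps
  have hueq : ∀ t : ℝ, usub st.N st.px i t
      = usub st.N st.px i 0 + (usub st.N st.px i 1 - usub st.N st.px i 0) * t := by
    intro t; unfold usub; ring
  have hveq : ∀ t : ℝ, usub st.N st.py j t
      = usub st.N st.py j 0 + (usub st.N st.py j 1 - usub st.N st.py j 0) * t := by
    intro t; unfold usub; ring
  set U0 := usub st.N st.px i 0
  set U1 := usub st.N st.px i 1
  set V0 := usub st.N st.py j 0
  set V1 := usub st.N st.py j 1
  rcases hsteady i j hi1 hiN hj1 hjN with ⟨h1, h2, h3, h4⟩ | ⟨h1, h2, h3, h4⟩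
  · -- all corner factors nonnegative
    have hpos := aux_bil_nonneg a b c d (xg st.N (i-1)) (xg st.N i) (xg st.N (j-1)) (xg st.N j)
      hqlt hrlt (by rw [e00]; exact h1) (by rw [e10]; exact h3)
      (by rw [e01]; exact h2) (by rw [e11]; exact h4)
    refine ⟨a + b*U0 + c*V0 + d*U0*V0, b*(U1-U0) + d*(U1-U0)*V0,
      c*(V1-V0) + d*U0*(V1-V0), d*(U1-U0)*(V1-V0), fun p hp => ?_⟩
    have hu := hmapx p.1 hp.1
    have hv := hmapy p.2 hp.2
    have hSp : st.S (usub st.N st.px i p.1, usub st.N st.py j p.2)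
        = a + b * usub st.N st.px i p.1 + c * usub st.N st.py j p.2
          + d * usub st.N st.px i p.1 * usub st.N st.py j p.2 :=
      hS _ (mkmem _ _ hu hv)
    have hnn : 0 ≤ st.S (usub st.N st.px i p.1, usub st.N st.py j p.2) := by
      rw [hSp]; exact hpos _ hu _ hv
    show |st.S (usub st.N st.px i p.1, usub st.N st.py j p.2)| = _
    rw [abs_of_nonneg hnn, hSp, hueq p.1, hveq p.2]
    ring
  · -- all corner factors nonpositive
    have hneg := aux_bil_nonpos a b c d (xg st.N (i-1)) (xg st.N i) (xg st.N (j-1)) (xg st.N j)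
      hqlt hrlt (by rw [e00]; exact h1) (by rw [e10]; exact h3)
      (by rw [e01]; exact h2) (by rw [e11]; exact h4)
    refine ⟨-(a + b*U0 + c*V0 + d*U0*V0), -(b*(U1-U0) + d*(U1-U0)*V0),
      -(c*(V1-V0) + d*U0*(V1-V0)), -(d*(U1-U0)*(V1-V0)), fun p hp => ?_⟩
    have hu := hmapx p.1 hp.1
    have hv := hmapy p.2 hp.2
    have hSp : st.S (usub st.N st.px i p.1, usub st.N st.py j p.2)
        = a + b * usub st.N st.px i p.1 + c * usub st.N st.py j p.2
          + d * usub st.N st.px i p.1 * usub st.N st.py j p.2 :=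
      hS _ (mkmem _ _ hu hv)
    have hnp : st.S (usub st.N st.px i p.1, usub st.N st.py j p.2) ≤ 0 := by
      rw [hSp]; exact hneg _ hu _ hv
    show |st.S (usub st.N st.px i p.1, usub st.N st.py j p.2)| = _
    rw [abs_of_nonpos hnp, hSp, hueq p.1, hveq p.2]
    ring

end AuxLemmas

set_option maxHeartbeats 1000000 in
open RFIS in
/-- **Lemma 4.2.**  If the vertical scaling factors are steady and have uniform sums
`γ_{rt}` under a compatible partition, then for all `r, t` with `Λ_r ∩ Λ'_t ≠ ∅` and all
`α, β` with `[x_α, x_{α+K}] × [y_β, y_{β+K}] ∈ {D'_{ij} : (i,j) ∈ Λ_r ∩ Λ'_t}`,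
`Σ_{(i,j) ∈ Λ_r(α,β)} |S(u_i(x), v_j(y))| = γ_{rt}` for every point `(x, y)` of the
rectangle. -/
theorem uniform_sums_everywhere (st : Setup) (m : ℕ) (B : Fin m → Set (ℝ × ℝ))
    (γ : Fin m → Fin m → ℝ) (hpart : IsPartition m B) (hcomp : IsCompatible st B)
    (hsteady : Steady st) (hus : HasUniformSums st B γ) :
    ∀ r t : Fin m, (Lam st B r ∩ Lam' st B t).Nonempty →
      ∀ α β : ℕ, α + st.K ≤ st.N → β + st.K ≤ st.N →
        (∃ ij ∈ Lam st B r ∩ Lam' st B t,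
          Dij' st.N st.px st.py ij.1 ij.2 = rect st.N st.K α β) →
        ∀ p ∈ rect st.N st.K α β,
          (∑ ij ∈ LamAB st B r α β,
            |st.S (usub st.N st.px ij.1 p.1, usub st.N st.py ij.2 p.2)|) = γ r t := by
  classical
  intro r t hne α β hα hβ hrect p hp
  obtain ⟨h1, h2, h3, h4⟩ := hus r t hne α β hα hβ hrect
  have hN0 : (0:ℝ) < st.N := Nat.cast_pos.2 (by have := st.hN; omega)
  have hK0 : (0:ℝ) < st.K := Nat.cast_pos.2 (by have := st.hK; omega)
  have hx : xg st.N α < xg st.N (α + st.K) := by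
    unfold xg
    rw [div_lt_div_iff₀ hN0 hN0]
    push_cast
    nlinarith
  have hy : xg st.N β < xg st.N (β + st.K) := by
    unfold xg
    rw [div_lt_div_iff₀ hN0 hN0]
    push_cast
    nlinarith
  obtain ⟨a, b, c, d, hG⟩ := aux_bil_sum (LamAB st B r α β)
    (fun ij p => |st.S (usub st.N st.px ij.1 p.1, usub st.N st.py ij.2 p.2)|)
    (rect st.N st.K α β)
    (fun ij hij => aux_term_bil st B r α β hsteady ij hij)
  have m00 : ((xg st.N α, xg st.N β) : ℝ × ℝ) ∈ rect st.N st.K α β :=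
    Set.mem_prod.2 ⟨Set.mem_Icc.2 ⟨le_rfl, hx.le⟩, Set.mem_Icc.2 ⟨le_rfl, hy.le⟩⟩
  have m10 : ((xg st.N (α + st.K), xg st.N β) : ℝ × ℝ) ∈ rect st.N st.K α β :=
    Set.mem_prod.2 ⟨Set.mem_Icc.2 ⟨hx.le, le_rfl⟩, Set.mem_Icc.2 ⟨le_rfl, hy.le⟩⟩
  have m01 : ((xg st.N α, xg st.N (β + st.K)) : ℝ × ℝ) ∈ rect st.N st.K α β :=
    Set.mem_prod.2 ⟨Set.mem_Icc.2 ⟨le_rfl, hx.le⟩, Set.mem_Icc.2 ⟨hy.le, le_rfl⟩⟩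
  have m11 : ((xg st.N (α + st.K), xg st.N (β + st.K)) : ℝ × ℝ) ∈ rect st.N st.K α β :=
    Set.mem_prod.2 ⟨Set.mem_Icc.2 ⟨hx.le, le_rfl⟩, Set.mem_Icc.2 ⟨hy.le, le_rfl⟩⟩
  have e00 : cSum st B r α β α β
      = a + b * xg st.N α + c * xg st.N β + d * xg st.N α * xg st.N β := hG _ m00
  have e10 : cSum st B r α β (α + st.K) β
      = a + b * xg st.N (α + st.K) + c * xg st.N β + d * xg st.N (α + st.K) * xg st.N β :=
    hG _ m10
  have e01 : cSum st B r α β α (β + st.K)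
      = a + b * xg st.N α + c * xg st.N (β + st.K) + d * xg st.N α * xg st.N (β + st.K) :=
    hG _ m01
  have e11 : cSum st B r α β (α + st.K) (β + st.K)
      = a + b * xg st.N (α + st.K) + c * xg st.N (β + st.K)
        + d * xg st.N (α + st.K) * xg st.N (β + st.K) := hG _ m11
  rw [e00] at h1; rw [e10] at h2; rw [e01] at h3; rw [e11] at h4
  have hconst := aux_bil_const a b c d (xg st.N α) (xg st.N (α + st.K))
    (xg st.N β) (xg st.N (β + st.K)) (γ r t) hx.ne hy.ne h1 h2 h3 h4
  exact (hG p hp).trans (hconst p.1 p.2)
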